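/- For every π ∈ S_n, the graph Γ(π) with vertex set {1,...,n} and edges { {a,b} : ℓ(t_{a,b}∘π) = ℓ(π) ± 1 } has a vertex of degree at most ⌊n/2⌋ + 1. -/

import Mathlib

open Equiv Finset

/-- Number of inversions (Coxeter length) of a permutation of `Fin n`. -/
def invNum {n : ℕ} (π : Equiv.Perm (Fin n)) : ℕ :=
  (Finset.univ.filter (fun p : Fin n × Fin n => p.1 < p.2 ∧ π p.2 < π p.1)).card

/-- Down degree: number of transpositions `t_{a,b}` with `ℓ(t_{a,b} π) = ℓ(π) - 1`. -/
def downDeg {n : ℕ} (π : Equiv.Perm (Fin n)) : ℕ :=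
  (Finset.univ.filter (fun p : Fin n × Fin n =>
    p.1 < p.2 ∧ invNum (Equiv.swap p.1 p.2 * π) + 1 = invNum π)).card

/-- Total degree: number of transpositions `t_{a,b}` with `ℓ(t_{a,b} π) = ℓ(π) ± 1`. -/
def totalDeg {n : ℕ} (π : Equiv.Perm (Fin n)) : ℕ :=
  (Finset.univ.filter (fun p : Fin n × Fin n =>
    p.1 < p.2 ∧ (invNum (Equiv.swap p.1 p.2 * π) + 1 = invNum π ∨
      invNum (Equiv.swap p.1 p.2 * π) = invNum π + 1))).card


lemma three_le {n : ℕ} (π : Equiv.Perm (Fin n)) (u w v : Fin n)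
    (huw : u < w) (hwv : w < v) (hac : π u < π w) (hcb : π w < π v) :
    invNum π + 3 ≤ invNum (Equiv.swap (π u) (π v) * π) := by
  classical
  set a := π u with ha
  set b := π v with hb
  set c := π w with hc
  have hab : a < b := hac.trans hcb
  have huv : u < v := huw.trans hwv
  set π' := Equiv.swap a b * π with hπ'
  have hπ'u : π' u = b := by simp [hπ', ha, hb]
  have hπ'v : π' v = a := by simp [hπ', hb, Equiv.swap_apply_right]
  have hπ'other : ∀ x : Fin n, x ≠ u → x ≠ v → π' x = π x := by
    intro x hxu hxv
    have h1 : π x ≠ a := fun h => hxu (π.injective (h.trans ha))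
    have h2 : π x ≠ b := fun h => hxv (π.injective (h.trans hb))
    simp [hπ', Equiv.swap_apply_of_ne_of_ne h1 h2]
  set Inv : Finset (Fin n × Fin n) :=
    Finset.univ.filter (fun p : Fin n × Fin n => p.1 < p.2 ∧ π p.2 < π p.1) with hInv
  set Inv' : Finset (Fin n × Fin n) :=
    Finset.univ.filter (fun p : Fin n × Fin n => p.1 < p.2 ∧ π' p.2 < π' p.1) with hInv'
  set D : Finset (Fin n × Fin n) :=
    insert (u, w) (insert (w, v) (insert (u, v) Inv)) with hD
  have hcardD : D.card = invNum π + 3 := by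
    have h1 : (u, v) ∉ Inv := by simp [hInv, ← ha, ← hb, not_lt.2 hab.le]
    have h2 : (w, v) ∉ insert (u, v) Inv := by
      simp [hInv, ← hb, ← hc, not_lt.2 hcb.le, Prod.ext_iff, (ne_of_gt huw : w ≠ u)]
    have h3 : (u, w) ∉ insert (w, v) (insert (u, v) Inv) := by
      simp [hInv, ← ha, ← hc, not_lt.2 hac.le, Prod.ext_iff, (ne_of_lt huw : u ≠ w),
        (ne_of_lt hwv : w ≠ v)]
    rw [hD, Finset.card_insert_of_notMem h3, Finset.card_insert_of_notMem h2,
      Finset.card_insert_of_notMem h1]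
    rfl
  set φ : Fin n × Fin n → Fin n × Fin n := fun p =>
    if p.2 = u ∧ a < π p.1 ∧ π p.1 < b then (p.1, v)
    else if p.1 = v ∧ a < π p.2 ∧ π p.2 < b then (u, p.2)
    else p with hφ
  have hmemD : ∀ p ∈ D, (p.1 < p.2 ∧ π p.2 < π p.1) ∨ p = (u, w) ∨ p = (w, v) ∨ p = (u, v) := by
    intro p hp
    rw [hD] at hp
    simp only [Finset.mem_insert, hInv, Finset.mem_filter] at hp
    tauto
  have hmem' : ∀ p : Fin n × Fin n, p.1 < p.2 → π' p.2 < π' p.1 → p ∈ Inv' := by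
    intro p h1 h2; simp [hInv', h1, h2]
  -- triple values of φ
  have hφuw : φ (u, w) = (u, w) := by
    simp [hφ, (ne_of_gt huw : w ≠ u), (ne_of_lt huv : u ≠ v)]
  have hφwv : φ (w, v) = (w, v) := by
    simp [hφ, (ne_of_gt huv : v ≠ u), (ne_of_lt hwv : w ≠ v)]
  have hφuv : φ (u, v) = (u, v) := by
    simp [hφ, (ne_of_gt huv : v ≠ u), (ne_of_lt huv : u ≠ v)]
  have hmaps : ∀ p ∈ D, φ p ∈ Inv' := by
    intro p hp
    obtain ⟨i, j⟩ := p
    rcases hmemD _ hp with hinv | h | h | h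
    · obtain ⟨hij, hπji⟩ := hinv
      simp only at hij hπji
      by_cases h1 : j = u ∧ a < π i ∧ π i < b
      · obtain ⟨hju, hai, hib⟩ := h1
        subst hju
        have hiu : i < j := hij
        have hiv : i ≠ v := ne_of_lt (hij.trans huv)
        have heq : φ (i, j) = (i, v) := by simp [hφ, hai, hib]
        rw [heq]
        refine hmem' _ (hij.trans huv) ?_
        rw [hπ'v, hπ'other i (ne_of_lt hij) hiv]
        exact hai
      · by_cases h2 : i = v ∧ a < π j ∧ π j < b
        · obtain ⟨hiv, haj, hjb⟩ := h2
          subst hiv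
          have hju : j ≠ u := ne_of_gt (huv.trans hij)
          have heq : φ (i, j) = (u, j) := by
            simp [hφ, hju, haj, hjb]
          rw [heq]
          refine hmem' _ (huv.trans hij) ?_
          rw [hπ'u, hπ'other j hju (ne_of_gt hij)]
          exact hjb
        · have heq : φ (i, j) = (i, j) := by
            simp only [hφ]; rw [if_neg h1, if_neg h2]
          rw [heq]
          refine hmem' _ hij ?_
          by_cases hiu : i = u
          · subst hiu
            have hjv : j ≠ v := by
              intro hjv; subst hjv
              rw [← ha, ← hb] at hπji
              exact absurd hπji (not_lt.2 hab.le)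
            have hju : j ≠ i := ne_of_gt hij
            rw [hπ'u, hπ'other j hju hjv]
            rw [← ha] at hπji
            exact hπji.trans hab
          · by_cases hiv : i = v
            · subst hiv
              have hju : j ≠ u := ne_of_gt (huv.trans hij)
              have hjv : j ≠ i := ne_of_gt hij
              rw [← hb] at hπji
              have hja : π j < a := by
                rcases lt_trichotomy (π j) a with h | h | h
                · exact h
                · exact absurd (π.injective (h.trans ha)) hju
                · exact absurd ⟨rfl, h, hπji⟩ h2
              rw [hπ'v, hπ'other j hju hjv]
              exact hja
            · by_cases hju : j = u
              · subst hju
                rw [← ha] at hπji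
                have hib : b < π i := by
                  rcases lt_trichotomy (π i) b with h | h | h
                  · exact absurd ⟨rfl, hπji, h⟩ h1
                  · exact absurd (π.injective (h.trans hb)) hiv
                  · exact h
                rw [hπ'u, hπ'other i hiu hiv]
                exact hib
              · by_cases hjv : j = v
                · subst hjv
                  rw [← hb] at hπji
                  rw [hπ'v, hπ'other i hiu hiv]
                  exact hab.trans hπji
                · rw [hπ'other i hiu hiv, hπ'other j hju hjv]
                  exact hπji
    · rw [h, hφuw]
      refine hmem' _ huw ?_
      rw [hπ'u, hπ'other w (ne_of_gt huw) (ne_of_lt hwv), ← hc]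
      exact hcb
    · rw [h, hφwv]
      refine hmem' _ hwv ?_
      rw [hπ'v, hπ'other w (ne_of_gt huw) (ne_of_lt hwv), ← hc]
      exact hac
    · rw [h, hφuv]
      refine hmem' _ huv ?_
      rw [hπ'u, hπ'v]
      exact hab
  have hinj : Set.InjOn φ D := by
    intro p hp p' hp' heq
    -- branch characterization
    have key : ∀ q ∈ D,
        (q.2 = u ∧ a < π q.1 ∧ π q.1 < b ∧ q.1 < u ∧ φ q = (q.1, v)) ∨
        (q.1 = v ∧ a < π q.2 ∧ π q.2 < b ∧ v < q.2 ∧ φ q = (u, q.2)) ∨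
        ((¬(q.2 = u ∧ a < π q.1 ∧ π q.1 < b)) ∧ (¬(q.1 = v ∧ a < π q.2 ∧ π q.2 < b))
          ∧ φ q = q) := by
      intro q hq
      by_cases h1 : q.2 = u ∧ a < π q.1 ∧ π q.1 < b
      · left
        refine ⟨h1.1, h1.2.1, h1.2.2, ?_, by simp [hφ, h1]⟩
        -- q ∈ Inv since triple has no second component u
        rcases hmemD _ hq with hinv | h | h | h
        · exact lt_of_lt_of_eq hinv.1 h1.1
        · rw [h] at h1; exact absurd h1.1 (ne_of_gt huw)
        · rw [h] at h1; exact absurd h1.1 (ne_of_gt huv)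
        · rw [h] at h1; exact absurd h1.1 (ne_of_gt huv)
      · by_cases h2 : q.1 = v ∧ a < π q.2 ∧ π q.2 < b
        · right; left
          refine ⟨h2.1, h2.2.1, h2.2.2, ?_, by
            simp only [hφ]; rw [if_neg h1, if_pos h2]⟩
          rcases hmemD _ hq with hinv | h | h | h
          · exact lt_of_eq_of_lt h2.1.symm hinv.1
          · rw [h] at h2; exact absurd h2.1 (ne_of_lt huv)
          · rw [h] at h2; exact absurd h2.1 (ne_of_lt hwv)
          · rw [h] at h2; exact absurd h2.1 (ne_of_lt huv)
        · right; right
          exact ⟨h1, h2, by simp only [hφ]; rw [if_neg h1, if_neg h2]⟩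
    rcases key p hp with ⟨hpu, hpa, hpb, hplt, hpφ⟩ | ⟨hpv, hpa, hpb, hplt, hpφ⟩ |
      ⟨hp1, hp2, hpφ⟩ <;>
      rcases key p' hp' with ⟨hqu, hqa, hqb, hqlt, hqφ⟩ | ⟨hqv, hqa, hqb, hqlt, hqφ⟩ |
        ⟨hq1, hq2, hqφ⟩
    · -- B1 B1
      rw [hpφ, hqφ] at heq
      simp only [Prod.mk.injEq] at heq
      exact Prod.ext heq.1 (hpu.trans hqu.symm)
    · -- B1 B2
      rw [hpφ, hqφ] at heq
      have h1 : p.1 = u := congrArg Prod.fst heq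
      exact absurd h1 (ne_of_lt hplt)
    · -- B1 E : p' = (p.1, v), derive contradiction
      exfalso
      have hp'eq : p' = (p.1, v) := by rw [← hqφ, ← heq, hpφ]
      have hv : p'.2 = v := by rw [hp'eq]
      have h1 : p'.1 = p.1 := by rw [hp'eq]
      -- p' ∈ D with second comp v : inversion (π v = b < π p'.1 contradict π p.1 < b)
      -- or (w,v) : p'.1 = w, but then p = (w, u) with w < u false... p.1 = w and p.1 < u
      -- or (u,v) : p'.1 = u, p.1 = u < u false
      rcases hmemD _ hp' with hinv | h | h | h
      · have : π p'.2 < π p'.1 := hinv.2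
        rw [hv, ← hb, h1] at this
        exact absurd hpb (not_lt.2 this.le)
      · exact absurd (congrArg Prod.snd h : p'.2 = w) (hv ▸ (ne_of_gt hwv : v ≠ w))
      · have : p.1 = w := by rw [← h1]; exact congrArg Prod.fst h
        rw [this] at hplt; exact absurd hplt (not_lt.2 huw.le)
      · have : p.1 = u := by rw [← h1]; exact congrArg Prod.fst h
        rw [this] at hplt; exact lt_irrefl _ hplt
    · -- B2 B1
      rw [hpφ, hqφ] at heq
      have h1 : p'.1 = u := (congrArg Prod.fst heq).symm
      exact absurd h1 (ne_of_lt hqlt)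
    · -- B2 B2
      rw [hpφ, hqφ] at heq
      simp only [Prod.mk.injEq] at heq
      exact Prod.ext (hpv.trans hqv.symm) heq.2
    · -- B2 E : p' = (u, p.2)
      exfalso
      have hp'eq : p' = (u, p.2) := by rw [← hqφ, ← heq, hpφ]
      have hu : p'.1 = u := by rw [hp'eq]
      have h2 : p'.2 = p.2 := by rw [hp'eq]
      rcases hmemD _ hp' with hinv | h | h | h
      · have : π p'.2 < π p'.1 := hinv.2
        rw [hu, ← ha, h2] at this
        exact absurd hpa (not_lt.2 this.le)
      · have : p.2 = w := by rw [← h2]; exact congrArg Prod.snd h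
        rw [this] at hplt; exact absurd hplt (not_lt.2 hwv.le)
      · exact absurd (congrArg Prod.fst h : p'.1 = w) (hu ▸ (ne_of_lt huw : u ≠ w))
      · have : p.2 = v := by rw [← h2]; exact congrArg Prod.snd h
        rw [this] at hplt; exact lt_irrefl _ hplt
    · -- E B1 (symmetric to B1 E)
      exfalso
      have hpeq : p = (p'.1, v) := by rw [← hpφ, heq, hqφ]
      have hv : p.2 = v := by rw [hpeq]
      have h1 : p.1 = p'.1 := by rw [hpeq]
      rcases hmemD _ hp with hinv | h | h | h
      · have : π p.2 < π p.1 := hinv.2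
        rw [hv, ← hb, h1] at this
        exact absurd hqb (not_lt.2 this.le)
      · exact absurd (congrArg Prod.snd h : p.2 = w) (hv ▸ (ne_of_gt hwv : v ≠ w))
      · have : p'.1 = w := by rw [← h1]; exact congrArg Prod.fst h
        rw [this] at hqlt; exact absurd hqlt (not_lt.2 huw.le)
      · have : p'.1 = u := by rw [← h1]; exact congrArg Prod.fst h
        rw [this] at hqlt; exact lt_irrefl _ hqlt
    · -- E B2
      exfalso
      have hpeq : p = (u, p'.2) := by rw [← hpφ, heq, hqφ]
      have hu : p.1 = u := by rw [hpeq]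
      have h2 : p.2 = p'.2 := by rw [hpeq]
      rcases hmemD _ hp with hinv | h | h | h
      · have : π p.2 < π p.1 := hinv.2
        rw [hu, ← ha, h2] at this
        exact absurd hqa (not_lt.2 this.le)
      · have : p'.2 = w := by rw [← h2]; exact congrArg Prod.snd h
        rw [this] at hqlt; exact absurd hqlt (not_lt.2 hwv.le)
      · exact absurd (congrArg Prod.fst h : p.1 = w) (hu ▸ (ne_of_lt huw : u ≠ w))
      · have : p'.2 = v := by rw [← h2]; exact congrArg Prod.snd h
        rw [this] at hqlt; exact lt_irrefl _ hqlt
    · -- E E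
      rw [hpφ, hqφ] at heq
      exact heq
  have := Finset.card_le_card_of_injOn φ hmaps hinj
  rw [hcardD] at this
  exact this

lemma perm_apply_inv_self {α : Type*} (f : Equiv.Perm α) (x : α) : f (f⁻¹ x) = x := by
  simp only [Equiv.Perm.coe_inv, Equiv.apply_symm_apply]

lemma not_edge {n : ℕ} (π : Equiv.Perm (Fin n)) (a b c : Fin n)
    (hab : a < b) (hac : a < c) (hcb : c < b)
    (hbtw : (π⁻¹ a < π⁻¹ c ∧ π⁻¹ c < π⁻¹ b) ∨ (π⁻¹ b < π⁻¹ c ∧ π⁻¹ c < π⁻¹ a)) :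
    ¬(invNum (Equiv.swap a b * π) + 1 = invNum π ∨
      invNum (Equiv.swap a b * π) = invNum π + 1) := by
  intro hedge
  have hanb : a ≠ b := ne_of_lt hab
  rcases hbtw with ⟨h1, h2⟩ | ⟨h1, h2⟩
  · have h3 := three_le π (π⁻¹ a) (π⁻¹ c) (π⁻¹ b) h1 h2
      (by rw [perm_apply_inv_self, perm_apply_inv_self]; exact hac)
      (by rw [perm_apply_inv_self, perm_apply_inv_self]; exact hcb)
    rw [perm_apply_inv_self, perm_apply_inv_self] at h3
    omega
  · set π'' := Equiv.swap a b * π with hπ''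
    have e1 : π'' (π⁻¹ b) = a := by
      simp [hπ'', perm_apply_inv_self, Equiv.swap_apply_right]
    have e2 : π'' (π⁻¹ c) = c := by
      have hca : c ≠ a := ne_of_gt hac
      have hcbne : c ≠ b := ne_of_lt hcb
      simp [hπ'', perm_apply_inv_self, Equiv.swap_apply_of_ne_of_ne hca hcbne]
    have e3 : π'' (π⁻¹ a) = b := by
      simp [hπ'', perm_apply_inv_self]
    have h3 := three_le π'' (π⁻¹ b) (π⁻¹ c) (π⁻¹ a) h1 h2
      (by rw [e1, e2]; exact hac) (by rw [e2, e3]; exact hcb)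
    rw [e1, e3] at h3
    have hsq : Equiv.swap a b * π'' = π := by
      rw [hπ'', ← mul_assoc, Equiv.swap_mul_self, one_mul]
    rw [hsq] at h3
    omega


def IntBtw (s t m : ℤ) : Prop := (s < m ∧ m < t) ∨ (t < m ∧ m < s)

def IntEmp (x : ℤ → ℤ) (lo hi a b : ℤ) : Prop :=
  ∀ c, lo ≤ c → c ≤ hi → a < c → c < b → ¬ IntBtw (x a) (x b) (x c)

lemma intbtw_comm {s t m : ℤ} : IntBtw s t m ↔ IntBtw t s m := by
  unfold IntBtw; tauto

lemma intbtw_neg {s t m : ℤ} : IntBtw (-s) (-t) (-m) ↔ IntBtw s t m := by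
  unfold IntBtw; omega

lemma intemp_neg {x : ℤ → ℤ} {lo hi a b : ℤ} (h : IntEmp x lo hi a b) :
    IntEmp (fun v => -(x v)) lo hi a b := by
  intro c h1 h2 h3 h4 hb
  exact h c h1 h2 h3 h4 (intbtw_neg.mp hb)

-- key lemma: position of an "above double" is strictly between x k and x (k+1)
lemma above_pos (x : ℤ → ℤ) (lo hi k : ℤ)
    (hinj : ∀ s t, lo ≤ s → s ≤ hi → lo ≤ t → t ≤ hi → x s = x t → s = t)
    (hk : lo ≤ k) (hk1 : k + 1 ≤ hi)
    (hpq : x k < x (k + 1))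
    (hmax : ∀ j, lo ≤ j → j + 1 ≤ hi → |x (j + 1) - x j| ≤ x (k + 1) - x k)
    (r : ℤ) (hrlo : lo ≤ r) (hrhi : r ≤ hi) (hrk : k + 1 < r)
    (hEk : IntEmp x lo hi k r) (hEk1 : IntEmp x lo hi (k + 1) r) :
    x k < x r ∧ x r < x (k + 1) := by
  have hsq : x r < x (k + 1) := by
    have h := hEk (k + 1) (by omega) hk1 (by omega) hrk
    have hne : x r ≠ x (k + 1) := fun hh => by
      have := hinj r (k + 1) hrlo hrhi (by omega) hk1 hh; omega
    unfold IntBtw at h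
    omega
  refine ⟨?_, hsq⟩
  by_contra hsp
  push_neg at hsp  -- x r ≤ x k
  have hne : x r ≠ x k := fun hh => by
    have := hinj r k hrlo hrhi hk (by omega) hh; omega
  have hsp' : x r < x k := lt_of_le_of_ne hsp hne
  -- walk argument
  set A : Finset ℤ := (Finset.Icc (k + 1) (r - 1)).filter (fun j => x (k + 1) ≤ x j) with hA
  have hk1A : k + 1 ∈ A := by
    simp [hA, Finset.mem_Icc]
    omega
  have hAne : A.Nonempty := ⟨k + 1, hk1A⟩
  set j := A.max' hAne with hj
  have hjA : j ∈ A := A.max'_mem hAne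
  obtain ⟨hjIcc, hjx⟩ := Finset.mem_filter.mp hjA
  rw [Finset.mem_Icc] at hjIcc
  have hnext : x (j + 1) ≤ x r := by
    rcases eq_or_lt_of_le (show j + 1 ≤ r by omega) with he | hlt
    · rw [he]
    · -- j+1 < r, j+1 not in A
      have hnotA : j + 1 ∉ A := fun hmem => by
        have := A.le_max' _ hmem
        omega
      have hxlt : x (j + 1) < x (k + 1) := by
        by_contra hge
        push_neg at hge
        exact hnotA (by simp [hA, Finset.mem_Icc]; exact ⟨⟨by omega, by omega⟩, hge⟩)
      have h := hEk1 (j + 1) (by omega) (by omega) (by omega) hlt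
      unfold IntBtw at h
      have hne2 : x (j + 1) ≠ x r := fun hh => by
        have := hinj (j + 1) r (by omega) (by omega) hrlo hrhi hh; omega
      omega
  have hm := hmax j (by omega) (by omega)
  rw [abs_le] at hm
  omega

lemma above_unique (x : ℤ → ℤ) (lo hi k : ℤ)
    (hinj : ∀ s t, lo ≤ s → s ≤ hi → lo ≤ t → t ≤ hi → x s = x t → s = t)
    (hk : lo ≤ k) (hk1 : k + 1 ≤ hi)
    (hpq : x k < x (k + 1))
    (hmax : ∀ j, lo ≤ j → j + 1 ≤ hi → |x (j + 1) - x j| ≤ x (k + 1) - x k)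
    (r1 r2 : ℤ) (h1lo : lo ≤ r1) (h1hi : r1 ≤ hi) (h1k : k + 1 < r1)
    (h2lo : lo ≤ r2) (h2hi : r2 ≤ hi) (h2k : k + 1 < r2)
    (hE1k : IntEmp x lo hi k r1) (hE1k1 : IntEmp x lo hi (k + 1) r1)
    (hE2k : IntEmp x lo hi k r2) (hE2k1 : IntEmp x lo hi (k + 1) r2) :
    r1 = r2 := by
  by_contra hne
  obtain ⟨hp1, hq1⟩ := above_pos x lo hi k hinj hk hk1 hpq hmax r1 h1lo h1hi h1k hE1k hE1k1
  obtain ⟨hp2, hq2⟩ := above_pos x lo hi k hinj hk hk1 hpq hmax r2 h2lo h2hi h2k hE2k hE2k1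
  have hxne : x r1 ≠ x r2 := fun hh => hne (hinj r1 r2 h1lo h1hi h2lo h2hi hh)
  rcases lt_or_gt_of_ne hxne with hx12 | hx21
  · -- x r1 < x r2
    rcases lt_or_gt_of_ne hne with hr | hr
    · exact hE2k r1 h1lo h1hi (by omega) hr (by unfold IntBtw; omega)
    · exact hE1k1 r2 h2lo h2hi (by omega) hr (by unfold IntBtw; omega)
  · rcases lt_or_gt_of_ne hne with hr | hr
    · exact hE2k1 r1 h1lo h1hi (by omega) hr (by unfold IntBtw; omega)
    · exact hE1k r2 h2lo h2hi (by omega) hr (by unfold IntBtw; omega)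

lemma above_unique' (x : ℤ → ℤ) (lo hi k : ℤ)
    (hinj : ∀ s t, lo ≤ s → s ≤ hi → lo ≤ t → t ≤ hi → x s = x t → s = t)
    (hk : lo ≤ k) (hk1 : k + 1 ≤ hi)
    (hmax : ∀ j, lo ≤ j → j + 1 ≤ hi → |x (j + 1) - x j| ≤ |x (k + 1) - x k|)
    (r1 r2 : ℤ) (h1lo : lo ≤ r1) (h1hi : r1 ≤ hi) (h1k : k + 1 < r1)
    (h2lo : lo ≤ r2) (h2hi : r2 ≤ hi) (h2k : k + 1 < r2)
    (hE1k : IntEmp x lo hi k r1) (hE1k1 : IntEmp x lo hi (k + 1) r1)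
    (hE2k : IntEmp x lo hi k r2) (hE2k1 : IntEmp x lo hi (k + 1) r2) :
    r1 = r2 := by
  have hne : x k ≠ x (k + 1) := fun hh => by
    have := hinj k (k + 1) hk (by omega) (by omega) hk1 hh; omega
  rcases lt_or_gt_of_ne hne with hpq | hqp
  · exact above_unique x lo hi k hinj hk hk1 hpq
      (fun j hj hj' => by
        have := hmax j hj hj'
        rwa [abs_of_pos (by omega : (0:ℤ) < x (k+1) - x k)] at this)
      r1 r2 h1lo h1hi h1k h2lo h2hi h2k hE1k hE1k1 hE2k hE2k1
  · refine above_unique (fun v => -(x v)) lo hi k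
      (fun s t hs hs' ht ht' hh => hinj s t hs hs' ht ht' (neg_inj.mp hh))
      hk hk1 (by simp; omega)
      (fun j hj hj' => by
        have := hmax j hj hj'
        rw [show -x (j+1) - -x j = -(x (j+1) - x j) by ring, abs_neg]
        rw [abs_of_neg (by omega : x (k+1) - x k < 0)] at this
        omega)
      r1 r2 h1lo h1hi h1k h2lo h2hi h2k
      (intemp_neg hE1k) (intemp_neg hE1k1) (intemp_neg hE2k) (intemp_neg hE2k1)

lemma below_unique' (x : ℤ → ℤ) (lo hi k : ℤ)
    (hinj : ∀ s t, lo ≤ s → s ≤ hi → lo ≤ t → t ≤ hi → x s = x t → s = t)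
    (hk : lo ≤ k) (hk1 : k + 1 ≤ hi)
    (hmax : ∀ j, lo ≤ j → j + 1 ≤ hi → |x (j + 1) - x j| ≤ |x (k + 1) - x k|)
    (r1 r2 : ℤ) (h1lo : lo ≤ r1) (h1hi : r1 ≤ hi) (h1k : r1 < k)
    (h2lo : lo ≤ r2) (h2hi : r2 ≤ hi) (h2k : r2 < k)
    (hE1k : IntEmp x lo hi r1 k) (hE1k1 : IntEmp x lo hi r1 (k + 1))
    (hE2k : IntEmp x lo hi r2 k) (hE2k1 : IntEmp x lo hi r2 (k + 1)) :
    r1 = r2 := by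
  set y : ℤ → ℤ := fun v => x (2 * k + 1 - v) with hy
  have hyk : y k = x (k + 1) := by simp only [hy]; congr 1; ring
  have hyk1 : y (k + 1) = x k := by simp only [hy]; congr 1; ring
  -- transfer Emp: for r < k, IntEmp x lo hi r (k+1) → IntEmp y (2k+1-hi) (2k+1-lo) k (2k+1-r)
  have htrans : ∀ r a b : ℤ, a < b → IntEmp x lo hi a b →
      IntEmp y (2 * k + 1 - hi) (2 * k + 1 - lo) (2 * k + 1 - b) (2 * k + 1 - a) := by
    intro r a b hab hE c' hc1 hc2 hc3 hc4 hb
    refine hE (2 * k + 1 - c') (by omega) (by omega) (by omega) (by omega) ?_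
    have h1 : y (2 * k + 1 - b) = x b := by simp only [hy]; congr 1; ring
    have h2 : y (2 * k + 1 - a) = x a := by simp only [hy]; congr 1; ring
    rw [h1, h2] at hb
    have h3 : y c' = x (2 * k + 1 - c') := by simp only [hy]
    rw [h3] at hb
    exact intbtw_comm.mp hb
  have key := above_unique' y (2 * k + 1 - hi) (2 * k + 1 - lo) k
    (by
      intro s t hs hs' ht ht' hh
      have := hinj (2 * k + 1 - s) (2 * k + 1 - t) (by omega) (by omega) (by omega) (by omega)
        (by simpa [hy] using hh)
      omega)
    (by omega) (by omega)
    (by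
      intro j hj hj'
      have h1 : y (j + 1) = x (2 * k - j) := by simp only [hy]; congr 1; ring
      have h2 : y j = x (2 * k + 1 - j) := by simp only [hy]
      rw [h1, h2, hyk1, hyk]
      have := hmax (2 * k - j) (by omega) (by omega)
      rw [show (2:ℤ) * k - j + 1 = 2 * k + 1 - j by ring] at this
      rw [show |x (2*k - j) - x (2*k+1-j)| = |x (2*k+1-j) - x (2*k-j)| from abs_sub_comm _ _,
        show |x k - x (k+1)| = |x (k+1) - x k| from abs_sub_comm _ _]
      exact this)
    (2 * k + 1 - r1) (2 * k + 1 - r2)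
    (by omega) (by omega) (by omega) (by omega) (by omega) (by omega)
    (by
      have := htrans r1 r1 (k + 1) (by omega) hE1k1
      rwa [show 2 * k + 1 - (k + 1) = k by ring] at this)
    (by
      have := htrans r1 r1 k (by omega) hE1k
      rwa [show 2 * k + 1 - k = k + 1 by ring] at this)
    (by
      have := htrans r2 r2 (k + 1) (by omega) hE2k1
      rwa [show 2 * k + 1 - (k + 1) = k by ring] at this)
    (by
      have := htrans r2 r2 k (by omega) hE2k
      rwa [show 2 * k + 1 - k = k + 1 by ring] at this)
  omega

/-- The Hasse-diagram graph of π has a vertex of degree at most n/2 + 1. -/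
theorem exists_small_degree_vertex {n : ℕ} (hn : 0 < n) (π : Equiv.Perm (Fin n)) :
    ∃ a : Fin n,
      (Finset.univ.filter (fun b : Fin n => b ≠ a ∧
        (invNum (Equiv.swap a b * π) + 1 = invNum π ∨
         invNum (Equiv.swap a b * π) = invNum π + 1))).card ≤ n / 2 + 1 := by
  classical
  rcases Nat.lt_or_ge n 2 with hn2 | hn2
  · -- n = 1
    refine ⟨⟨0, hn⟩, ?_⟩
    have : (Finset.univ.filter (fun b : Fin n => b ≠ ⟨0, hn⟩ ∧
        (invNum (Equiv.swap ⟨0, hn⟩ b * π) + 1 = invNum π ∨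
         invNum (Equiv.swap ⟨0, hn⟩ b * π) = invNum π + 1))) = ∅ := by
      rw [Finset.eq_empty_iff_forall_notMem]
      intro b hb
      rw [Finset.mem_filter] at hb
      exact hb.2.1 (Fin.ext (by omega))
    rw [this]
    simp
  -- main case : n ≥ 2
  set σ : Equiv.Perm (Fin n) := π⁻¹ with hσ
  set x : ℤ → ℤ := fun v => ((σ ⟨v.toNat % n, Nat.mod_lt _ hn⟩ : Fin n) : ℤ) with hxdef
  have hfin : ∀ c : Fin n, (⟨((c : ℤ)).toNat % n, Nat.mod_lt _ hn⟩ : Fin n) = c := by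
    intro c
    exact Fin.ext (by simp [Nat.mod_eq_of_lt c.isLt])
  have hx : ∀ c : Fin n, x (c : ℤ) = ((σ c : Fin n) : ℤ) := by
    intro c
    simp only [hxdef]
    rw [hfin c]
  have hinj : ∀ s t : ℤ, 0 ≤ s → s ≤ (n : ℤ) - 1 → 0 ≤ t → t ≤ (n : ℤ) - 1 →
      x s = x t → s = t := by
    intro s t hs hs' ht ht' hh
    simp only [hxdef] at hh
    have h1 : (σ ⟨s.toNat % n, Nat.mod_lt _ hn⟩ : Fin n) = σ ⟨t.toNat % n, Nat.mod_lt _ hn⟩ :=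
      Fin.ext (by exact_mod_cast hh)
    have h3 : s.toNat % n = t.toNat % n := congrArg Fin.val (σ.injective h1)
    have hs1 : s.toNat < n := by omega
    have ht1 : t.toNat < n := by omega
    rw [Nat.mod_eq_of_lt hs1, Nat.mod_eq_of_lt ht1] at h3
    omega
  have hfl : ∀ u v : Fin n, ((u : ℤ) < (v : ℤ)) ↔ u < v := by
    intro u v
    rw [Fin.lt_def]
    exact_mod_cast Iff.rfl
  -- choose the consecutive pair with maximal position gap
  have hne0 : (Finset.Icc (0:ℤ) ((n:ℤ) - 2)).Nonempty := ⟨0, by rw [Finset.mem_Icc]; omega⟩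
  obtain ⟨K, hKmem, hKmax⟩ := Finset.exists_max_image (Finset.Icc (0:ℤ) ((n:ℤ) - 2))
    (fun j => |x (j + 1) - x j|) hne0
  rw [Finset.mem_Icc] at hKmem
  have hmax : ∀ j : ℤ, 0 ≤ j → j + 1 ≤ (n:ℤ) - 1 → |x (j + 1) - x j| ≤ |x (K + 1) - x K| := by
    intro j h1 h2
    exact hKmax j (by rw [Finset.mem_Icc]; omega)
  have hKn : K.toNat + 1 < n := by omega
  set k : Fin n := ⟨K.toNat, by omega⟩ with hkdef
  set k1 : Fin n := ⟨K.toNat + 1, by omega⟩ with hk1def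
  have hkZ : (k : ℤ) = K := by simp [hkdef]; omega
  have hk1Z : (k1 : ℤ) = K + 1 := by simp [hk1def]; omega
  have hkk1 : k < k1 := by rw [Fin.lt_def]; simp [hkdef, hk1def]
  -- geometric predicate and sets
  set Geo : Fin n → Fin n → Prop := fun v b =>
    ∀ c : Fin n, min v b < c → c < max v b →
      ¬ IntBtw ((σ (min v b) : Fin n) : ℤ) ((σ (max v b) : Fin n) : ℤ) ((σ c : Fin n) : ℤ)
    with hGeo
  set G : Fin n → Finset (Fin n) := fun v => Finset.univ.filter (fun b => b ≠ v ∧ Geo v b)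
    with hG
  -- oriented versions of Geo
  have geo_lt : ∀ v b : Fin n, v < b → Geo v b →
      ∀ c : Fin n, v < c → c < b →
        ¬ IntBtw ((σ v : Fin n) : ℤ) ((σ b : Fin n) : ℤ) ((σ c : Fin n) : ℤ) := by
    intro v b hvb h
    rw [hGeo] at h
    simpa [min_eq_left hvb.le, max_eq_right hvb.le] using h
  have geo_gt : ∀ v b : Fin n, b < v → Geo v b →
      ∀ c : Fin n, b < c → c < v →
        ¬ IntBtw ((σ b : Fin n) : ℤ) ((σ v : Fin n) : ℤ) ((σ c : Fin n) : ℤ) := by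
    intro v b hvb h
    rw [hGeo] at h
    simpa [min_eq_right hvb.le, max_eq_left hvb.le] using h
  -- conversion to IntEmp
  have mkEmp : ∀ u v : Fin n, u < v →
      (∀ c : Fin n, u < c → c < v →
        ¬ IntBtw ((σ u : Fin n) : ℤ) ((σ v : Fin n) : ℤ) ((σ c : Fin n) : ℤ)) →
      IntEmp x 0 ((n:ℤ) - 1) (u : ℤ) (v : ℤ) := by
    intro u v huv h c hc0 hcn hc1 hc2 hb
    have hcn' : c.toNat < n := by omega
    set c' : Fin n := ⟨c.toNat, hcn'⟩ with hc'def
    have hcz : (c' : ℤ) = c := by simp [hc'def]; omega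
    rw [hx u, hx v, ← hcz, hx c'] at hb
    refine h c' ?_ ?_ hb
    · rw [← hfl]; omega
    · rw [← hfl]; omega
  -- N ⊆ G
  have hsub : ∀ a b : Fin n, b ≠ a →
      (invNum (Equiv.swap a b * π) + 1 = invNum π ∨
        invNum (Equiv.swap a b * π) = invNum π + 1) → b ∈ G a := by
    intro a b hba hedge
    rw [hG]
    simp only [Finset.mem_filter, Finset.mem_univ, true_and]
    refine ⟨hba, ?_⟩
    rw [hGeo]
    intro c hc1 hc2 hbtw
    rcases lt_or_gt_of_ne hba with hblt | hbgt
    · -- b < a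
      simp only [min_eq_right hblt.le, max_eq_left hblt.le] at hc1 hc2 hbtw
      have hbtw' : (σ b < σ c ∧ σ c < σ a) ∨ (σ a < σ c ∧ σ c < σ b) := by
        rcases hbtw with ⟨h1, h2⟩ | ⟨h1, h2⟩
        · exact Or.inl ⟨(hfl _ _).mp h1, (hfl _ _).mp h2⟩
        · exact Or.inr ⟨(hfl _ _).mp h1, (hfl _ _).mp h2⟩
      rw [hσ] at hbtw'
      rw [Equiv.swap_comm a b] at hedge
      exact not_edge π b a c hblt hc1 hc2 hbtw' hedge
    · -- a < b
      simp only [min_eq_left hbgt.le, max_eq_right hbgt.le] at hc1 hc2 hbtw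
      have hbtw' : (σ a < σ c ∧ σ c < σ b) ∨ (σ b < σ c ∧ σ c < σ a) := by
        rcases hbtw with ⟨h1, h2⟩ | ⟨h1, h2⟩
        · exact Or.inl ⟨(hfl _ _).mp h1, (hfl _ _).mp h2⟩
        · exact Or.inr ⟨(hfl _ _).mp h1, (hfl _ _).mp h2⟩
      rw [hσ] at hbtw'
      exact not_edge π a b c hbgt hc1 hc2 hbtw' hedge
  have memG : ∀ v b : Fin n, b ∈ G v → b ≠ v ∧ Geo v b := by
    intro v b hb
    rw [hG] at hb
    simpa only [Finset.mem_filter, Finset.mem_univ, true_and] using hb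
  -- at most one above double
  have habove : ∀ r1 r2 : Fin n, r1 ∈ G k → r1 ∈ G k1 → r2 ∈ G k → r2 ∈ G k1 →
      k1 < r1 → k1 < r2 → r1 = r2 := by
    intro r1 r2 h1k h1k1 h2k h2k1 hr1 hr2
    have hkr1 : k < r1 := lt_trans hkk1 hr1
    have hkr2 : k < r2 := lt_trans hkk1 hr2
    obtain ⟨-, g1⟩ := memG k r1 h1k
    obtain ⟨-, g1'⟩ := memG k1 r1 h1k1
    obtain ⟨-, g2⟩ := memG k r2 h2k
    obtain ⟨-, g2'⟩ := memG k1 r2 h2k1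
    have E1 : IntEmp x 0 ((n:ℤ) - 1) K (r1 : ℤ) := by
      have := mkEmp k r1 hkr1 (geo_lt k r1 hkr1 g1); rwa [hkZ] at this
    have E1' : IntEmp x 0 ((n:ℤ) - 1) (K + 1) (r1 : ℤ) := by
      have := mkEmp k1 r1 hr1 (geo_lt k1 r1 hr1 g1'); rwa [hk1Z] at this
    have E2 : IntEmp x 0 ((n:ℤ) - 1) K (r2 : ℤ) := by
      have := mkEmp k r2 hkr2 (geo_lt k r2 hkr2 g2); rwa [hkZ] at this
    have E2' : IntEmp x 0 ((n:ℤ) - 1) (K + 1) (r2 : ℤ) := by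
      have := mkEmp k1 r2 hr2 (geo_lt k1 r2 hr2 g2'); rwa [hk1Z] at this
    have ha1 : K + 1 < (r1 : ℤ) := by
      have := (hfl k1 r1).mpr hr1; rwa [hk1Z] at this
    have ha2 : K + 1 < (r2 : ℤ) := by
      have := (hfl k1 r2).mpr hr2; rwa [hk1Z] at this
    have hz := above_unique' x 0 ((n:ℤ) - 1) K hinj (by omega) (by omega) hmax
      (r1 : ℤ) (r2 : ℤ)
      (Int.natCast_nonneg _) (by have := r1.isLt; omega)
      (by omega)
      (Int.natCast_nonneg _) (by have := r2.isLt; omega)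
      (by omega)
      E1 E1' E2 E2'
    exact Fin.ext (by exact_mod_cast hz)
  -- at most one below double
  have hbelow : ∀ r1 r2 : Fin n, r1 ∈ G k → r1 ∈ G k1 → r2 ∈ G k → r2 ∈ G k1 →
      r1 < k → r2 < k → r1 = r2 := by
    intro r1 r2 h1k h1k1 h2k h2k1 hr1 hr2
    have hr1k1 : r1 < k1 := lt_trans hr1 hkk1
    have hr2k1 : r2 < k1 := lt_trans hr2 hkk1
    obtain ⟨-, g1⟩ := memG k r1 h1k
    obtain ⟨-, g1'⟩ := memG k1 r1 h1k1
    obtain ⟨-, g2⟩ := memG k r2 h2k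
    obtain ⟨-, g2'⟩ := memG k1 r2 h2k1
    have E1 : IntEmp x 0 ((n:ℤ) - 1) (r1 : ℤ) K := by
      have := mkEmp r1 k hr1 (geo_gt k r1 hr1 g1); rwa [hkZ] at this
    have E1' : IntEmp x 0 ((n:ℤ) - 1) (r1 : ℤ) (K + 1) := by
      have := mkEmp r1 k1 hr1k1 (geo_gt k1 r1 hr1k1 g1'); rwa [hk1Z] at this
    have E2 : IntEmp x 0 ((n:ℤ) - 1) (r2 : ℤ) K := by
      have := mkEmp r2 k hr2 (geo_gt k r2 hr2 g2); rwa [hkZ] at this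
    have E2' : IntEmp x 0 ((n:ℤ) - 1) (r2 : ℤ) (K + 1) := by
      have := mkEmp r2 k1 hr2k1 (geo_gt k1 r2 hr2k1 g2'); rwa [hk1Z] at this
    have ha1 : (r1 : ℤ) < K := by
      have := (hfl r1 k).mpr hr1; rwa [hkZ] at this
    have ha2 : (r2 : ℤ) < K := by
      have := (hfl r2 k).mpr hr2; rwa [hkZ] at this
    have hz := below_unique' x 0 ((n:ℤ) - 1) K hinj (by omega) (by omega) hmax
      (r1 : ℤ) (r2 : ℤ)
      (Int.natCast_nonneg _) (by have := r1.isLt; omega)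
      ha1
      (Int.natCast_nonneg _) (by have := r2.isLt; omega)
      ha2
      E1 E1' E2 E2'
    exact Fin.ext (by exact_mod_cast hz)
  -- the intersection has at most two elements
  have hinter : (G k ∩ G k1).card ≤ 2 := by
    have hcover : G k ∩ G k1 ⊆
        (G k ∩ G k1).filter (fun r => k1 < r) ∪ (G k ∩ G k1).filter (fun r => r < k) := by
      intro r hr
      obtain ⟨hrk, hrk1⟩ := Finset.mem_inter.mp hr
      have h1 := (memG _ _ hrk).1
      have h2 := (memG _ _ hrk1).1
      rw [Finset.mem_union, Finset.mem_filter, Finset.mem_filter]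
      have htri : r < k ∨ k1 < r := by
        rw [Fin.lt_def, Fin.lt_def]
        have hv1 : r.val ≠ k.val := fun hh => h1 (Fin.ext hh)
        have hv2 : r.val ≠ k1.val := fun hh => h2 (Fin.ext hh)
        have hh1 : k.val = K.toNat := by rw [hkdef]
        have hh2 : k1.val = K.toNat + 1 := by rw [hk1def]
        omega
      rcases htri with h | h
      · exact Or.inr ⟨hr, h⟩
      · exact Or.inl ⟨hr, h⟩
    have c1 : ((G k ∩ G k1).filter (fun r => k1 < r)).card ≤ 1 := by
      rw [Finset.card_le_one]
      intro r1 hm1 r2 hm2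
      rw [Finset.mem_filter, Finset.mem_inter] at hm1 hm2
      exact habove r1 r2 hm1.1.1 hm1.1.2 hm2.1.1 hm2.1.2 hm1.2 hm2.2
    have c2 : ((G k ∩ G k1).filter (fun r => r < k)).card ≤ 1 := by
      rw [Finset.card_le_one]
      intro r1 hm1 r2 hm2
      rw [Finset.mem_filter, Finset.mem_inter] at hm1 hm2
      exact hbelow r1 r2 hm1.1.1 hm1.1.2 hm2.1.1 hm2.1.2 hm1.2 hm2.2
    calc (G k ∩ G k1).card ≤ _ := Finset.card_le_card hcover
    _ ≤ _ := Finset.card_union_le _ _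
    _ ≤ 2 := by omega
  have hunion : (G k ∪ G k1).card ≤ n := by
    have := Finset.card_le_univ (G k ∪ G k1)
    simpa using this
  have hsum : (G k).card + (G k1).card ≤ n + 2 := by
    have := Finset.card_union_add_card_inter (G k) (G k1)
    omega
  have hNk : (Finset.univ.filter (fun b : Fin n => b ≠ k ∧
      (invNum (Equiv.swap k b * π) + 1 = invNum π ∨
       invNum (Equiv.swap k b * π) = invNum π + 1))).card ≤ (G k).card := by
    apply Finset.card_le_card
    intro b hb
    rw [Finset.mem_filter] at hb
    exact hsub k b hb.2.1 hb.2.2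
  have hNk1 : (Finset.univ.filter (fun b : Fin n => b ≠ k1 ∧
      (invNum (Equiv.swap k1 b * π) + 1 = invNum π ∨
       invNum (Equiv.swap k1 b * π) = invNum π + 1))).card ≤ (G k1).card := by
    apply Finset.card_le_card
    intro b hb
    rw [Finset.mem_filter] at hb
    exact hsub k1 b hb.2.1 hb.2.2
  rcases le_total ((G k).card) ((G k1).card) with h | h
  · exact ⟨k, by omega⟩
  · exact ⟨k1, by omega⟩
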